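/- Let A ⊆ [0,1)^{d'} and B ⊆ [0,1)^{d''} be measurable. Let (x_1,...,x_N) be a sampling scheme in [0,1)^{d'} such that the indicators 1_A(x_i) are lower negatively α-dependent, and let (y_1,...,y_N) be i.i.d. uniform points on [0,1)^{d''}, independent of the x_i. Then the indicators 1_{A×B}(x_i,y_i), i=1,...,N, are lower negatively α-dependent; that is, for every J ⊆ [N] of size t, P(∩_{j∈J}{(x_j,y_j) ∉ A×B}) ≤ α · P((x_1,y_1) ∉ A×B)^t. -/

import Mathlib

open MeasureTheory ProbabilityTheory
open scoped ENNReal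

/-- Padding a sampling scheme with lower negatively α-dependent indicators by i.i.d. uniform
Monte Carlo points preserves lower negative α-dependence of the indicators. -/
theorem stmt_6 {Ω : Type*} [MeasureSpace Ω] [IsProbabilityMeasure (ℙ : Measure Ω)]
    {d' d'' N : ℕ} (hN : 0 < N) (A : Set (Fin d' → ℝ)) (B : Set (Fin d'' → ℝ))
    (hA : MeasurableSet A) (hB : MeasurableSet B)
    (x : Fin N → Ω → (Fin d' → ℝ)) (y : Fin N → Ω → (Fin d'' → ℝ))
    (hxm : ∀ i, Measurable (x i)) (hym : ∀ i, Measurable (y i))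
    -- x is a sampling scheme: uniform marginals and exchangeable
    (hxu : ∀ i, Measure.map (x i) ℙ = Measure.pi fun _ => volume.restrict (Set.Ico (0 : ℝ) 1))
    (hxex : ∀ π : Equiv.Perm (Fin N),
      Measure.map (fun ω (j : Fin N) => x (π j) ω) ℙ = Measure.map (fun ω j => x j ω) ℙ)
    -- y are i.i.d. uniform on [0,1)^{d''}
    (hyu : ∀ i, Measure.map (y i) ℙ = Measure.pi fun _ => volume.restrict (Set.Ico (0 : ℝ) 1))
    (hyindep : iIndepFun y ℙ)
    -- the y family is independent of the x family
    (hindep : IndepFun (fun ω i => x i ω) (fun ω i => y i ω) ℙ)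
    (α : ℝ≥0∞) (hα : 1 ≤ α)
    (hx : ∀ u : Finset (Fin N),
      ℙ (⋂ j ∈ u, {ω | x j ω ∉ A}) ≤ α * ∏ j ∈ u, ℙ {ω | x j ω ∉ A}) :
    ∀ u : Finset (Fin N),
      ℙ (⋂ j ∈ u, {ω | ¬(x j ω ∈ A ∧ y j ω ∈ B)}) ≤
        α * ℙ {ω | ¬(x ⟨0, hN⟩ ω ∈ A ∧ y ⟨0, hN⟩ ω ∈ B)} ^ u.card := by
  classical
  intro u
  set i0 : Fin N := ⟨0, hN⟩
  set p : ℝ≥0∞ := (Measure.pi fun _ : Fin d' => volume.restrict (Set.Ico (0 : ℝ) 1)) A with hp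
  set q : ℝ≥0∞ := (Measure.pi fun _ : Fin d'' => volume.restrict (Set.Ico (0 : ℝ) 1)) B with hq
  -- marginal probabilities
  have hxp : ∀ j, ℙ (x j ⁻¹' A) = p := by
    intro j; rw [hp, ← hxu j, Measure.map_apply (hxm j) hA]
  have hyp : ∀ j, ℙ (y j ⁻¹' B) = q := by
    intro j; rw [hq, ← hyu j, Measure.map_apply (hym j) hB]
  have hxpc : ∀ j, ℙ {ω | x j ω ∉ A} = 1 - p := by
    intro j
    have : {ω | x j ω ∉ A} = (x j ⁻¹' A)ᶜ := rfl
    rw [this, prob_compl_eq_one_sub ((hxm j) hA), hxp j]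
  have hypc : ∀ j, ℙ {ω | y j ω ∉ B} = 1 - q := by
    intro j
    have : {ω | y j ω ∉ B} = (y j ⁻¹' B)ᶜ := rfl
    rw [this, prob_compl_eq_one_sub ((hym j) hB), hyp j]
  -- the right-hand side probability
  have hRHS : ℙ {ω | ¬(x i0 ω ∈ A ∧ y i0 ω ∈ B)} = (1 - p) * q + (1 - q) := by
    have hset : {ω | ¬(x i0 ω ∈ A ∧ y i0 ω ∈ B)} =
        (x i0 ⁻¹' Aᶜ ∩ y i0 ⁻¹' B) ∪ (y i0 ⁻¹' B)ᶜ := by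
      ext ω
      by_cases h : y i0 ω ∈ B <;> simp [h]
    have hdisj : Disjoint (x i0 ⁻¹' Aᶜ ∩ y i0 ⁻¹' B) ((y i0 ⁻¹' B)ᶜ) := by
      rw [Set.disjoint_left]
      rintro ω ⟨-, h⟩ hc
      exact hc h
    have h0 : IndepFun (x i0) (y i0) ℙ :=
      hindep.comp (measurable_pi_apply i0) (measurable_pi_apply i0)
    rw [hset, measure_union hdisj ((hym i0) hB).compl,
      h0.measure_inter_preimage_eq_mul _ _ hA.compl hB]
    have h1 : ℙ (x i0 ⁻¹' Aᶜ) = 1 - p := hxpc i0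
    have h2 : ℙ ((y i0 ⁻¹' B)ᶜ) = 1 - q := hypc i0
    rw [h1, h2, hyp i0]
  -- decomposition of the intersection event
  set E : Finset (Fin N) → Set Ω := fun v =>
    (⋂ j ∈ v, {ω | x j ω ∉ A}) ∩
      ((⋂ j ∈ v, y j ⁻¹' B) ∩ ⋂ j ∈ u \ v, (y j ⁻¹' B)ᶜ) with hE
  have hsub : (⋂ j ∈ u, {ω | ¬(x j ω ∈ A ∧ y j ω ∈ B)}) ⊆ ⋃ v ∈ u.powerset, E v := by
    intro ω hω
    simp only [Set.mem_iInter, Set.mem_setOf_eq] at hω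
    refine Set.mem_biUnion (Finset.mem_powerset.2 (Finset.filter_subset
      (fun j => y j ω ∈ B) u)) ?_
    refine ⟨?_, ?_, ?_⟩
    · simp only [Set.mem_iInter, Set.mem_setOf_eq]
      intro j hj
      rw [Finset.mem_filter] at hj
      exact fun hxA => hω j hj.1 ⟨hxA, hj.2⟩
    · simp only [Set.mem_iInter]
      intro j hj
      exact (Finset.mem_filter.1 hj).2
    · simp only [Set.mem_iInter]
      intro j hj
      rw [Finset.mem_sdiff, Finset.mem_filter] at hj
      exact fun h => hj.2 ⟨hj.1, h⟩
  -- bound each piece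
  have hEbound : ∀ v ∈ u.powerset, ℙ (E v) ≤
      α * ((∏ _j ∈ v, ((1 - p) * q)) * ∏ _j ∈ u \ v, (1 - q)) := by
    intro v hv
    rw [Finset.mem_powerset] at hv
    -- independence of the x- and y-parts
    have hXset : (⋂ j ∈ v, {ω | x j ω ∉ A}) =
        (fun ω i => x i ω) ⁻¹' (⋂ j ∈ (v : Set (Fin N)), (fun z => z j) ⁻¹' Aᶜ) := by
      ext ω; simp
    have hYset : ((⋂ j ∈ v, y j ⁻¹' B) ∩ ⋂ j ∈ u \ v, (y j ⁻¹' B)ᶜ) =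
        (fun ω i => y i ω) ⁻¹'
          ((⋂ j ∈ (v : Set (Fin N)), (fun z => z j) ⁻¹' B) ∩
            ⋂ j ∈ ((u \ v : Finset (Fin N)) : Set (Fin N)), (fun z => z j) ⁻¹' Bᶜ) := by
      ext ω; simp
    have hmX : MeasurableSet (⋂ j ∈ (v : Set (Fin N)), (fun z : Fin N → Fin d' → ℝ => z j) ⁻¹' Aᶜ) :=
      MeasurableSet.biInter (Set.to_countable _)
        (fun j _ => (measurable_pi_apply j) hA.compl)
    have hmY : MeasurableSet
        ((⋂ j ∈ (v : Set (Fin N)), (fun z : Fin N → Fin d'' → ℝ => z j) ⁻¹' B) ∩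
          ⋂ j ∈ ((u \ v : Finset (Fin N)) : Set (Fin N)), (fun z : Fin N → Fin d'' → ℝ => z j) ⁻¹' Bᶜ) := by
      refine MeasurableSet.inter ?_ ?_ <;>
        exact MeasurableSet.biInter (Set.to_countable _)
          (fun j _ => (measurable_pi_apply j) (by first | exact hB | exact hB.compl))
    have hsplit : ℙ (E v) =
        ℙ (⋂ j ∈ v, {ω | x j ω ∉ A}) *
          ℙ ((⋂ j ∈ v, y j ⁻¹' B) ∩ ⋂ j ∈ u \ v, (y j ⁻¹' B)ᶜ) := by
      rw [hE]
      simp only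
      rw [hXset, hYset, hindep.measure_inter_preimage_eq_mul _ _ hmX hmY]
    -- the y part factorizes
    have hY : ℙ ((⋂ j ∈ v, y j ⁻¹' B) ∩ ⋂ j ∈ u \ v, (y j ⁻¹' B)ᶜ) =
        (∏ _j ∈ v, q) * ∏ _j ∈ u \ v, (1 - q) := by
      have hsets : ∀ j ∈ u, MeasurableSet[(inferInstance : MeasurableSpace (Fin d'' → ℝ)).comap (y j)]
          (if j ∈ v then y j ⁻¹' B else (y j ⁻¹' B)ᶜ) := by
        intro j _
        by_cases h : j ∈ v
        · simp only [h, if_true]; exact ⟨B, hB, rfl⟩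
        · simp only [h, if_false]; exact ⟨Bᶜ, hB.compl, rfl⟩
      have hmeas := hyindep.meas_biInter (S := u) hsets
      have hIeq : (⋂ j ∈ u, (if j ∈ v then y j ⁻¹' B else (y j ⁻¹' B)ᶜ)) =
          ((⋂ j ∈ v, y j ⁻¹' B) ∩ ⋂ j ∈ u \ v, (y j ⁻¹' B)ᶜ) := by
        ext ω
        simp only [Set.mem_iInter, Set.mem_inter_iff, Set.mem_preimage, Set.mem_compl_iff,
          Finset.mem_sdiff]
        constructor
        · intro h
          exact ⟨fun j hj => by have := h j (hv hj); simpa [hj] using this,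
            fun j hj => by have := h j hj.1; simpa [hj.2] using this⟩
        · intro h j hj
          by_cases hjv : j ∈ v
          · simpa [hjv] using h.1 j hjv
          · simpa [hjv] using h.2 j ⟨hj, hjv⟩
      have hprod : (∏ j ∈ u, ℙ (if j ∈ v then y j ⁻¹' B else (y j ⁻¹' B)ᶜ)) =
          (∏ j ∈ v, ℙ (if j ∈ v then y j ⁻¹' B else (y j ⁻¹' B)ᶜ)) *
            ∏ j ∈ u \ v, ℙ (if j ∈ v then y j ⁻¹' B else (y j ⁻¹' B)ᶜ) := by
        rw [← Finset.prod_union (Finset.disjoint_sdiff), Finset.union_sdiff_of_subset hv]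
      rw [← hIeq, hmeas, hprod]
      congr 1
      · exact Finset.prod_congr rfl fun j hj => by simp [hj, hyp j]
      · refine Finset.prod_congr rfl fun j hj => ?_
        have h1 : j ∉ v := (Finset.mem_sdiff.1 hj).2
        simp only [h1, if_false]
        rw [prob_compl_eq_one_sub ((hym j) hB), hyp j]
    have hX : ℙ (⋂ j ∈ v, {ω | x j ω ∉ A}) ≤ α * ∏ _j ∈ v, (1 - p) := by
      calc ℙ (⋂ j ∈ v, {ω | x j ω ∉ A}) ≤ α * ∏ j ∈ v, ℙ {ω | x j ω ∉ A} := hx v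
        _ = α * ∏ _j ∈ v, (1 - p) := by
            congr 1; exact Finset.prod_congr rfl fun j _ => hxpc j
    calc ℙ (E v) = ℙ (⋂ j ∈ v, {ω | x j ω ∉ A}) *
          ℙ ((⋂ j ∈ v, y j ⁻¹' B) ∩ ⋂ j ∈ u \ v, (y j ⁻¹' B)ᶜ) := hsplit
      _ ≤ (α * ∏ _j ∈ v, (1 - p)) * ((∏ _j ∈ v, q) * ∏ _j ∈ u \ v, (1 - q)) := by
          rw [hY]; exact mul_le_mul_left hX _
      _ = α * ((∏ _j ∈ v, ((1 - p) * q)) * ∏ _j ∈ u \ v, (1 - q)) := by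
          rw [Finset.prod_mul_distrib]; ring
  -- put everything together
  calc ℙ (⋂ j ∈ u, {ω | ¬(x j ω ∈ A ∧ y j ω ∈ B)})
      ≤ ℙ (⋃ v ∈ u.powerset, E v) := measure_mono hsub
    _ ≤ ∑ v ∈ u.powerset, ℙ (E v) := measure_biUnion_finset_le _ _
    _ ≤ ∑ v ∈ u.powerset, α * ((∏ _j ∈ v, ((1 - p) * q)) * ∏ _j ∈ u \ v, (1 - q)) :=
        Finset.sum_le_sum hEbound
    _ = α * ∑ v ∈ u.powerset, (∏ _j ∈ v, ((1 - p) * q)) * ∏ _j ∈ u \ v, (1 - q) := by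
        rw [Finset.mul_sum]
    _ = α * ∏ _j ∈ u, ((1 - p) * q + (1 - q)) := by
        rw [← Finset.prod_add]
    _ = α * ℙ {ω | ¬(x i0 ω ∈ A ∧ y i0 ω ∈ B)} ^ u.card := by
        rw [hRHS, Finset.prod_const]
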